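/- In Schaeffer's bijection, labels become distances to the root vertex: if q = Φ_n(τ, U) with (τ, U) ∈ 𝒲⁺_n and ∂ is the root vertex of q, then for every vertex v of τ (i.e., every vertex of q other than ∂), the graph distance in q satisfies d_gr(∂, v) = U(v) + 1. -/

import Mathlib

/-- A plane tree: a finite set of finite sequences of positive integers (here modelled as
lists of naturals with entries `≥ 1`), containing the root `[]`, closed under taking parents
(dropping the last coordinate), and such that the children of `u` present in the tree
are exactly `u ++ [j]` for `1 ≤ j ≤ k_u`. -/
structure PlaneTree where
  verts : Finset (List ℕ)
  root_mem : ([] : List ℕ) ∈ verts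
  parent_mem : ∀ v ∈ verts, v ≠ ([] : List ℕ) → v.dropLast ∈ verts
  children : ∀ u ∈ verts, ∃ k : ℕ, ∀ j : ℕ, (u ++ [j]) ∈ verts ↔ 1 ≤ j ∧ j ≤ k

/-- The number of children `k_u(τ)` of a vertex `u` in the plane tree `τ`. -/
def PlaneTree.numChildren (τ : PlaneTree) (u : List ℕ) : ℕ :=
  (τ.verts.filter (fun v => v ≠ [] ∧ v.dropLast = u)).card

/-- The set of edges of `τ`: pairs `(π(v), v)` for `v ∈ τ \ {∅}`. -/
def PlaneTree.edges (τ : PlaneTree) : Finset (List ℕ × List ℕ) :=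
  (τ.verts.erase []).image (fun v => (v.dropLast, v))

/-- The set `∂τ` of leaves of `τ` different from the root. -/
def PlaneTree.leaves (τ : PlaneTree) : Finset (List ℕ) :=
  τ.verts.filter (fun v => v ≠ [] ∧ τ.numChildren v = 0)

open scoped Classical

/-- Discrete intermediate value theorem for integer sequences with steps of size at most 1. -/
lemma ivt_aux (g : ℕ → ℤ) (hstep : ∀ j, |g (j + 1) - g j| ≤ 1) (c : ℤ) :
    ∀ N i, c ≤ g i → g (i + N) ≤ c → ∃ j, i ≤ j ∧ g j = c := by
  intro N
  induction N with
  | zero =>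
    intro i h1 h2
    exact ⟨i, le_refl _, le_antisymm (by simpa using h2) h1⟩
  | succ N ih =>
    intro i h1 h2
    rcases eq_or_lt_of_le h1 with he | hlt
    · exact ⟨i, le_refl _, he.symm⟩
    · have hs := abs_le.mp (hstep i)
      have hg1 : c ≤ g (i + 1) := by
        have : c + 1 ≤ g i := Int.add_one_le_iff.mpr hlt
        linarith [hs.1, hs.2]
      have h2' : g (i + 1 + N) ≤ c := by
        have he : i + 1 + N = i + (N + 1) := by ring
        rw [he]; exact h2
      obtain ⟨j, hj, hje⟩ := ih (i + 1) hg1 h2'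
      exact ⟨j, le_trans (Nat.le_succ i) hj, hje⟩

/-- The successor of a corner `i` in Schaeffer's construction:
`succ(i) = min{ j ≥ i : U(v_j) = U(v_i) − 1 }` (the contour sequence `v` being extended
periodically). -/
noncomputable def succCorner (U : List ℕ → ℤ) (v : ℕ → List ℕ) (i : ℕ) : ℕ :=
  sInf {j : ℕ | i ≤ j ∧ U (v j) = U (v i) - 1}

/-- The arcs of Schaeffer's construction: the corner `i` (with vertex `v_i`) is joined to the
extra vertex `∂` (encoded by `none`) if `U(v_i) = 0`, and to the corner `succ(i)` otherwise. -/
noncomputable def cornerEdge (U : List ℕ → ℤ) (v : ℕ → List ℕ) (i : ℕ) :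
    Option (List ℕ) × Option (List ℕ) :=
  (some (v i), if U (v i) = 0 then none else some (v (succCorner U v i)))

/-- The graph of the quadrangulation `Φ_n(τ, U)` built by Schaeffer's bijection: its vertices
are the vertices of the tree together with `∂` (encoded by `none`), two vertices being
adjacent when some arc of the construction joins them. -/
noncomputable def schaefferGraph (n : ℕ) (U : List ℕ → ℤ) (v : ℕ → List ℕ) :
    SimpleGraph (Option (List ℕ)) where
  Adj x y := x ≠ y ∧ ∃ i < 2 * n, cornerEdge U v i = (x, y) ∨ cornerEdge U v i = (y, x)
  symm := ⟨by
    rintro x y ⟨hne, i, hi, h⟩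
    exact ⟨hne.symm, i, hi, h.symm⟩⟩
  loopless := ⟨fun x h => h.1 rfl⟩

/-- In Schaeffer's bijection, labels become distances to the root vertex: if
`q = Φ_n(τ, U)` with `(τ, U)` a well-labeled tree with `n` edges and contour exploration
sequence `v`, then for every vertex `x` of the tree, `d_gr(∂, x) = U(x) + 1` in `q`. -/
theorem stmt_13 (n : ℕ) (hn : 1 ≤ n) (τ : PlaneTree) (hcard : τ.verts.card = n + 1)
    (v : ℕ → List ℕ) (hv0 : v 0 = []) (hper : ∀ i, v (i + 2 * n) = v i)
    (hmem : ∀ i, v i ∈ τ.verts)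
    (hstep : ∀ i, ((v (i + 1)).dropLast = v i ∧ v (i + 1) ≠ []) ∨
      ((v i).dropLast = v (i + 1) ∧ v i ≠ []))
    (hsurj : ∀ w ∈ τ.verts, ∃ i < 2 * n, v i = w)
    (hcount : ∀ w ∈ τ.verts, ((Finset.range (2 * n)).filter (fun i => v i = w)).card
      = τ.numChildren w + (if w = [] then 0 else 1))
    (U : List ℕ → ℤ) (hU0 : U [] = 0)
    (hinc : ∀ w ∈ τ.verts, w ≠ [] → |U w - U w.dropLast| ≤ 1)
    (hpos : ∀ w ∈ τ.verts, 0 ≤ U w) :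
    ∀ x ∈ τ.verts, ((schaefferGraph n U v).dist none (some x) : ℤ) = U x + 1 := by
  set G := schaefferGraph n U v with hG
  -- labels change by at most one along the contour
  have hcontour : ∀ j, |U (v (j + 1)) - U (v j)| ≤ 1 := by
    intro j
    rcases hstep j with ⟨h1, h2⟩ | ⟨h1, h2⟩
    · have := hinc (v (j + 1)) (hmem (j + 1)) h2
      rwa [h1] at this
    · have := hinc (v j) (hmem j) h2
      rw [h1] at this
      rwa [abs_sub_comm] at this
  -- the contour returns to the root at multiples of 2n
  have hroot : ∀ k, v (2 * n * k) = [] := by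
    intro k
    induction k with
    | zero => simpa using hv0
    | succ k ih =>
      have he : 2 * n * (k + 1) = 2 * n * k + 2 * n := by ring
      rw [he, hper]; exact ih
  -- the successor corner is well defined and has label one less
  have hsucc : ∀ i, U (v i) ≠ 0 →
      i ≤ succCorner U v i ∧ U (v (succCorner U v i)) = U (v i) - 1 := by
    intro i hne
    have hgi : 0 ≤ U (v i) := hpos _ (hmem i)
    have hc : 0 ≤ U (v i) - 1 := by omega
    have hiN : i ≤ 2 * n * (i + 1) := by
      have h2 : 1 * (i + 1) ≤ 2 * n * (i + 1) :=
        Nat.mul_le_mul_right _ (by omega)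
      omega
    have hJ : U (v (i + (2 * n * (i + 1) - i))) ≤ U (v i) - 1 := by
      have he : i + (2 * n * (i + 1) - i) = 2 * n * (i + 1) := by omega
      rw [he, hroot, hU0]; exact hc
    obtain ⟨j, hij, hje⟩ :=
      ivt_aux (fun j => U (v j)) hcontour (U (v i) - 1) (2 * n * (i + 1) - i) i
        (by show U (v i) - 1 ≤ U (v i); omega) hJ
    have hmemS : succCorner U v i ∈ {j : ℕ | i ≤ j ∧ U (v j) = U (v i) - 1} :=
      Nat.sInf_mem ⟨j, hij, hje⟩
    exact ⟨hmemS.1, hmemS.2⟩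
  -- potential function
  set D : Option (List ℕ) → ℤ := fun o => o.elim 0 (fun w => U w + 1) with hD
  -- edges change the potential by at most 1
  have hedge : ∀ x y, G.Adj x y → |D x - D y| ≤ 1 := by
    rintro x y ⟨hne, i, hi, h⟩
    have key : ∀ a b : Option (List ℕ), cornerEdge U v i = (a, b) → |D a - D b| ≤ 1 := by
      intro a b hab
      unfold cornerEdge at hab
      by_cases hU : U (v i) = 0
      · rw [if_pos hU] at hab
        have ha : a = some (v i) := (congrArg Prod.fst hab).symm
        have hb : b = none := (congrArg Prod.snd hab).symm
        subst ha; subst hb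
        simp [hD, hU]
      · rw [if_neg hU] at hab
        have ha : a = some (v i) := (congrArg Prod.fst hab).symm
        have hb : b = some (v (succCorner U v i)) := (congrArg Prod.snd hab).symm
        have hs := (hsucc i hU).2
        subst ha; subst hb
        simp only [hD, Option.elim]
        rw [hs]
        simp
    rcases h with h | h
    · exact key x y h
    · rw [abs_sub_comm]; exact key y x h
  -- lower bound: any walk is at least as long as the potential difference
  have hwalk : ∀ (a b : Option (List ℕ)) (p : G.Walk a b), |D a - D b| ≤ (p.length : ℤ) := by
    intro a b p
    induction p with
    | nil => simp
    | @cons u w w' h q ih =>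
      have h1 := hedge u w h
      calc |D u - D w'| ≤ |D u - D w| + |D w - D w'| := abs_sub_le _ _ _
        _ ≤ 1 + q.length := add_le_add h1 ih
        _ = ((q.length + 1 : ℕ) : ℤ) := by push_cast; ring
  -- upper bound: construct an explicit walk of length U x + 1
  have upper : ∀ m : ℕ, ∀ x ∈ τ.verts, U x = (m : ℤ) →
      ∃ p : G.Walk (some x) none, p.length = m + 1 := by
    intro m
    induction m with
    | zero =>
      intro x hx hUx
      obtain ⟨i, hi, hvi⟩ := hsurj x hx
      have hadj : G.Adj (some x) none := by
        refine ⟨by simp, i, hi, Or.inl ?_⟩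
        unfold cornerEdge
        rw [hvi, if_pos (by simpa using hUx)]
      exact ⟨SimpleGraph.Walk.cons hadj SimpleGraph.Walk.nil, rfl⟩
    | succ m ih =>
      intro x hx hUx
      obtain ⟨i, hi, hvi⟩ := hsurj x hx
      have hUne : U (v i) ≠ 0 := by rw [hvi, hUx]; exact_mod_cast Nat.succ_ne_zero m
      obtain ⟨_, hUy⟩ := hsucc i hUne
      set y := v (succCorner U v i) with hy
      have hymem : y ∈ τ.verts := hmem _
      have hUy' : U y = (m : ℤ) := by rw [hUy, hvi, hUx]; push_cast; ring
      have hxy : x ≠ y := by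
        intro he
        rw [← he, hUx] at hUy'
        omega
      have hadj : G.Adj (some x) (some y) := by
        refine ⟨by simpa using hxy, i, hi, Or.inl ?_⟩
        unfold cornerEdge
        rw [if_neg hUne, hvi]
      obtain ⟨p, hp⟩ := ih y hymem hUy'
      exact ⟨SimpleGraph.Walk.cons hadj p, by simp [hp]⟩
  intro x hx
  have hUx : U x = ((U x).toNat : ℤ) := (Int.toNat_of_nonneg (hpos x hx)).symm
  obtain ⟨p, hp⟩ := upper (U x).toNat x hx hUx
  have hreach : G.Reachable none (some x) := ⟨p.reverse⟩
  have hub : G.dist none (some x) ≤ (U x).toNat + 1 := by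
    have h := SimpleGraph.dist_le p.reverse
    rwa [SimpleGraph.Walk.length_reverse, hp] at h
  obtain ⟨q, hq⟩ := hreach.exists_walk_length_eq_dist
  have hlb := hwalk none (some x) q
  rw [hq] at hlb
  simp only [hD, Option.elim] at hlb
  rw [abs_of_nonpos (by linarith [hpos x hx])] at hlb
  omega
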